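/- Let A be a complex unital Banach algebra, let a, δa ∈ A, let p, q ∈ A be idempotents, and suppose b ∈ A satisfies b·a·b = b, R_r(b) = R_r(p) and K_r(b) = R_r(q) (i.e., b = a^{(2,l)}_{p,q}). Assume 1 + b·δa is invertible. Put ā = a + δa and f = (1 + b·δa)⁻¹·(1 − b·a). Then: (1) f is idempotent (f² = f) and K_r(ā) ⊆ R_r(f); (2) K_r(ā) = R_r(f) if and only if R_r(ā) ∩ R_r(q) = {0}. -/

import Mathlib

/-- Right range `R_r(a) = {a·x : x ∈ A}`. -/
def Rr {A : Type*} [Ring A] (a : A) : Set A := {y | ∃ x, y = a * x}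

/-- Right kernel `K_r(a) = {x ∈ A : a·x = 0}`. -/
def Kr {A : Type*} [Ring A] (a : A) : Set A := {x | a * x = 0}

/-- Left range `R_l(a) = {x·a : x ∈ A}`. -/
def Rl {A : Type*} [Ring A] (a : A) : Set A := {y | ∃ x, y = x * a}

/-- Left kernel `K_l(a) = {x ∈ A : x·a = 0}`. -/
def Kl {A : Type*} [Ring A] (a : A) : Set A := {x | x * a = 0}
theorem stmt3 {A : Type*} [NormedRing A] [NormedAlgebra ℂ A] [CompleteSpace A]
    (a δa p q b : A) (hp : p * p = p) (hq : q * q = q)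
    (hb1 : b * a * b = b) (hb2 : Rr b = Rr p) (hb3 : Kr b = Rr q)
    (hu : IsUnit (1 + b * δa)) :
    (Ring.inverse (1 + b * δa) * (1 - b * a) * (Ring.inverse (1 + b * δa) * (1 - b * a))
        = Ring.inverse (1 + b * δa) * (1 - b * a) ∧
      Kr (a + δa) ⊆ Rr (Ring.inverse (1 + b * δa) * (1 - b * a))) ∧
    (Kr (a + δa) = Rr (Ring.inverse (1 + b * δa) * (1 - b * a)) ↔
      Rr (a + δa) ∩ Rr q = {0}) := by
  set v := Ring.inverse (1 + b * δa) with hv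
  have huv : (1 + b * δa) * v = 1 := Ring.mul_inverse_cancel _ hu
  have hvu : v * (1 + b * δa) = 1 := Ring.inverse_mul_cancel _ hu
  set e : A := 1 - b * a with he_def
  have key1 : b * a * (b * δa) = b * δa := by rw [← mul_assoc, hb1]
  have key2 : b * a * (b * a) = b * a := by rw [← mul_assoc, hb1]
  have heu : e * (1 + b * δa) = e := by
    have : e * (1 + b * δa) = 1 + b * δa - b * a - b * a * (b * δa) := by
      simp only [he_def]; noncomm_ring
    rw [this, key1]; simp only [he_def]; noncomm_ring
  have hee : e * e = e := by
    have : e * e = 1 - b * a - b * a + b * a * (b * a) := by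
      simp only [he_def]; noncomm_ring
    rw [this, key2]; simp only [he_def]; noncomm_ring
  have hev : e * v = e := by
    calc e * v = (e * (1 + b * δa)) * v := by rw [heu]
    _ = e * ((1 + b * δa) * v) := by rw [mul_assoc]
    _ = e := by rw [huv, mul_one]
  have hba : b * (a + δa) = (1 + b * δa) - e := by
    simp only [he_def]; noncomm_ring
  -- key : b * ((a+δa) * (v*e)) = 0
  have hkey : b * ((a + δa) * (v * e)) = 0 := by
    calc b * ((a + δa) * (v * e)) = (b * (a + δa)) * (v * e) := by noncomm_ring
    _ = ((1 + b * δa) - e) * (v * e) := by rw [hba]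
    _ = ((1 + b * δa) * v) * e - (e * v) * e := by noncomm_ring
    _ = e - e := by rw [huv, hev, one_mul, hee]
    _ = 0 := sub_self e
  -- any element of Kr (a+δa) is fixed by f = v*e
  have hfix : ∀ x : A, (a + δa) * x = 0 → x = (v * e) * x := by
    intro x hx
    have h1 : (b * (a + δa)) * x = 0 := by
      rw [mul_assoc, hx, mul_zero]
    have h2 : (1 + b * δa) * x = e * x := by
      rw [hba, sub_mul] at h1
      exact sub_eq_zero.mp h1
    calc x = (v * (1 + b * δa)) * x := by rw [hvu, one_mul]
    _ = v * ((1 + b * δa) * x) := by rw [mul_assoc]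
    _ = v * (e * x) := by rw [h2]
    _ = (v * e) * x := by rw [← mul_assoc]
  -- elements of Rr q are killed by b
  have hRq : ∀ z : A, z ∈ Rr q → b * z = 0 := by
    intro z hz
    have : z ∈ Kr b := by rw [hb3]; exact hz
    exact this
  have hidem : v * e * (v * e) = v * e := by
    calc v * e * (v * e) = v * ((e * v) * e) := by noncomm_ring
    _ = v * (e * e) := by rw [hev]
    _ = v * e := by rw [hee]
  have hsub : Kr (a + δa) ⊆ Rr (v * e) := by
    intro x hx
    exact ⟨x, hfix x hx⟩
  refine ⟨⟨hidem, hsub⟩, ?_, ?_⟩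
  · -- Kr (a+δa) = Rr (v*e) → intersection trivial
    intro h
    have hf0 : (a + δa) * (v * e) = 0 := by
      have : (v * e) ∈ Rr (v * e) := ⟨1, by rw [mul_one]⟩
      rw [← h] at this
      exact this
    ext z
    simp only [Set.mem_inter_iff, Set.mem_singleton_iff]
    constructor
    · rintro ⟨⟨x, rfl⟩, hzq⟩
      have hbz : b * ((a + δa) * x) = 0 := hRq _ hzq
      have h1 : (b * (a + δa)) * x = 0 := by rw [mul_assoc]; exact hbz
      have h2 : (1 + b * δa) * x = e * x := by
        rw [hba, sub_mul] at h1
        exact sub_eq_zero.mp h1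
      have hx : x = (v * e) * x := by
        calc x = (v * (1 + b * δa)) * x := by rw [hvu, one_mul]
        _ = v * ((1 + b * δa) * x) := by rw [mul_assoc]
        _ = v * (e * x) := by rw [h2]
        _ = (v * e) * x := by rw [← mul_assoc]
      calc (a + δa) * x = (a + δa) * ((v * e) * x) := by rw [← hx]
      _ = ((a + δa) * (v * e)) * x := by rw [← mul_assoc]
      _ = 0 := by rw [hf0, zero_mul]
    · rintro rfl
      exact ⟨⟨0, by rw [mul_zero]⟩, ⟨0, by rw [mul_zero]⟩⟩
  · -- intersection trivial → Kr (a+δa) = Rr (v*e)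
    intro h
    have hmem : (a + δa) * (v * e) ∈ Rr (a + δa) ∩ Rr q := by
      refine ⟨⟨v * e, rfl⟩, ?_⟩
      rw [← hb3]
      exact hkey
    have hf0 : (a + δa) * (v * e) = 0 := by
      rw [h] at hmem; exact hmem
    apply Set.Subset.antisymm hsub
    rintro z ⟨x, rfl⟩
    show (a + δa) * (v * e * x) = 0
    rw [← mul_assoc, hf0, zero_mul]
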